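/- Let ℓ be a learning function, K ≥ 1, and let ℓ^{-1} denote the inverse of the restriction of ℓ to [0,1]. Then for every h in the simplex Δ^{K−1}, the maximal feasible scale satisfies H(h) ≥ K·ℓ^{-1}(1/K). -/

import Mathlib

open Finset

noncomputable section

/-- The simplex Δ^{K-1}: nonnegative coordinates summing to 1. -/
def simplex (K : ℕ) : Set (Fin K → ℝ) :=
  {π | (∀ k, 0 ≤ π k) ∧ ∑ k, π k = 1}

/-- ℓ¹-norm on ℝ^K. -/
def l1 {K : ℕ} (a : Fin K → ℝ) : ℝ := ∑ k, |a k|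

/-- Coverage operator C(a,b) = ∑ min(a_k, b_k). -/
def Cov {K : ℕ} (a b : Fin K → ℝ) : ℝ := ∑ k, min (a k) (b k)

/-- A learning function ℓ : [0,∞) → [0,∞): continuous, strictly increasing,
strictly concave, ℓ(0)=0, ℓ(1)=1, continuously differentiable on [0,1]
with derivative `deriv`, ℓ'(1) > 0 (finiteness of ℓ'(0) is automatic). -/
structure LearningFunction where
  toFun : ℝ → ℝ
  deriv : ℝ → ℝ
  continuousOn : ContinuousOn toFun (Set.Ici 0)
  strictMonoOn : StrictMonoOn toFun (Set.Ici 0)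
  strictConcaveOn : StrictConcaveOn ℝ (Set.Ici 0) toFun
  nonneg : ∀ s, 0 ≤ s → 0 ≤ toFun s
  map_zero : toFun 0 = 0
  map_one : toFun 1 = 1
  hasDerivAt : ∀ s ∈ Set.Icc (0:ℝ) 1,
    HasDerivWithinAt toFun (deriv s) (Set.Icc (0:ℝ) 1) s
  derivContinuousOn : ContinuousOn deriv (Set.Icc (0:ℝ) 1)
  deriv_one_pos : 0 < deriv 1

/-- Maximal feasible scale H(π) = sup { H ≥ 0 : ∑ ℓ(H π_k) ≤ 1 }. -/
def Hscale {K : ℕ} (L : LearningFunction) (π : Fin K → ℝ) : ℝ :=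
  sSup {H : ℝ | 0 ≤ H ∧ ∑ k, L.toFun (H * π k) ≤ 1}

/-- Relative inefficiency index λ(π) = 1/H(π). -/
def lam {K : ℕ} (L : LearningFunction) (π : Fin K → ℝ) : ℝ :=
  1 / Hscale L π

/-- Γ(z) = ‖z‖₁ λ(z/‖z‖₁) for z ≠ 0, Γ(0) = 0. -/
def Gam {K : ℕ} (L : LearningFunction) (z : Fin K → ℝ) : ℝ :=
  if z = 0 then 0 else l1 z * lam L (fun k => z k / l1 z)

/-- Fragmentation index D(π) = 1 - ∑ π_k². -/
def Dfrag {K : ℕ} (π : Fin K → ℝ) : ℝ := 1 - ∑ k, (π k) ^ 2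

/-- Lipschitz constant L_Γ = ℓ̄ + 2 ℓ̄³/ℓ̲. -/
def LGam (L : LearningFunction) : ℝ := L.deriv 0 + 2 * L.deriv 0 ^ 3 / L.deriv 1


/-- Lower bound on the integrator scale: H(h) ≥ K·ℓ⁻¹(1/K) for every h in the simplex,
where ℓ⁻¹ is the inverse of ℓ restricted to [0,1]. -/
theorem Hscale_ge_K_mul_inv {K : ℕ} (hK : 1 ≤ K) (L : LearningFunction)
    (h : Fin K → ℝ) (hh : h ∈ simplex K) :
    (K : ℝ) * Function.invFunOn L.toFun (Set.Icc 0 1) (1 / (K : ℝ)) ≤ Hscale L h := by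
  obtain ⟨hpos, hsum⟩ := hh
  have hKpos : (0:ℝ) < K := by exact_mod_cast hK
  set t := Function.invFunOn L.toFun (Set.Icc 0 1) (1 / (K : ℝ)) with ht
  have hmem : (1/(K:ℝ)) ∈ Set.Icc (0:ℝ) 1 :=
    ⟨by positivity, by rw [div_le_one hKpos]; exact_mod_cast hK⟩
  have hexists : ∃ s ∈ Set.Icc (0:ℝ) 1, L.toFun s = 1/(K:ℝ) := by
    have hc : ContinuousOn L.toFun (Set.Icc 0 1) :=
      L.continuousOn.mono (fun x hx => hx.1)
    have h01 : (1/(K:ℝ)) ∈ Set.Icc (L.toFun 0) (L.toFun 1) := by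
      rw [L.map_zero, L.map_one]; exact hmem
    obtain ⟨s, hs, hse⟩ := intermediate_value_Icc (by norm_num : (0:ℝ) ≤ 1) hc h01
    exact ⟨s, hs, hse⟩
  have htmem : t ∈ Set.Icc (0:ℝ) 1 := Function.invFunOn_mem hexists
  have hteq : L.toFun t = 1/(K:ℝ) := Function.invFunOn_eq hexists
  have ht0 : 0 ≤ t := htmem.1
  -- feasibility of K * t
  have hfeas : ∑ k, L.toFun ((K:ℝ) * t * h k) ≤ 1 := by
    have hjensen := L.strictConcaveOn.concaveOn.le_map_sum
      (t := Finset.univ) (w := fun _ : Fin K => 1/(K:ℝ))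
      (p := fun k => (K:ℝ) * t * h k)
      (fun i _ => by positivity)
      (by simp [Finset.sum_const, Finset.card_univ]; field_simp)
      (fun i _ => by
        have := hpos i
        simp only [Set.mem_Ici]
        positivity)
    have hsum2 : ∑ k, (1/(K:ℝ)) • ((K:ℝ) * t * h k) = t := by
      calc ∑ k, (1/(K:ℝ)) • ((K:ℝ) * t * h k) = ∑ k, t * h k := by
            refine Finset.sum_congr rfl fun k _ => ?_
            simp only [smul_eq_mul]; field_simp
        _ = t := by rw [← Finset.mul_sum, hsum, mul_one]
    rw [hsum2, hteq] at hjensen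
    have : ∑ k, L.toFun ((K:ℝ) * t * h k) =
        (K:ℝ) * ∑ k, (1/(K:ℝ)) • L.toFun ((K:ℝ) * t * h k) := by
      rw [Finset.mul_sum]
      congr 1; ext k; simp only [smul_eq_mul]; field_simp
    rw [this]
    calc (K:ℝ) * ∑ k, (1/(K:ℝ)) • L.toFun ((K:ℝ) * t * h k)
        ≤ (K:ℝ) * (1/(K:ℝ)) := by
          exact mul_le_mul_of_nonneg_left hjensen (le_of_lt hKpos)
      _ = 1 := by field_simp
  have hin : (K:ℝ) * t ∈ {H : ℝ | 0 ≤ H ∧ ∑ k, L.toFun (H * h k) ≤ 1} :=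
    ⟨by positivity, hfeas⟩
  -- bounded above
  have hne : Nonempty (Fin K) := ⟨⟨0, hK⟩⟩
  obtain ⟨k0, _, hk0⟩ := Finset.exists_le_of_sum_le (f := fun _ : Fin K => 1/(K:ℝ))
    (g := h) Finset.univ_nonempty (by
      rw [hsum, Finset.sum_const, Finset.card_univ, Fintype.card_fin]
      simp only [nsmul_eq_mul, mul_one_div_cancel hKpos.ne', le_refl])
  have hk0pos : 0 < h k0 := lt_of_lt_of_le (by positivity) hk0
  have hbdd : BddAbove {H : ℝ | 0 ≤ H ∧ ∑ k, L.toFun (H * h k) ≤ 1} := by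
    refine ⟨(K:ℝ), fun H hH => ?_⟩
    obtain ⟨hH0, hHle⟩ := hH
    have hterm : L.toFun (H * h k0) ≤ 1 := by
      calc L.toFun (H * h k0) ≤ ∑ k, L.toFun (H * h k) := by
            apply Finset.single_le_sum (f := fun k => L.toFun (H * h k))
              (fun k _ => L.nonneg _ (by have := hpos k; positivity))
              (Finset.mem_univ k0)
        _ ≤ 1 := hHle
    have hle1 : H * h k0 ≤ 1 := by
      by_contra hc
      push_neg at hc
      have := L.strictMonoOn (Set.mem_Ici.2 (by norm_num : (0:ℝ) ≤ 1))
        (Set.mem_Ici.2 (by linarith)) hc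
      rw [L.map_one] at this
      linarith
    calc H = (H * h k0) / h k0 := by field_simp
      _ ≤ 1 / h k0 := by gcongr
      _ ≤ (K:ℝ) := by
          rw [div_le_iff₀ hk0pos]
          calc (1:ℝ) = (K:ℝ) * (1/(K:ℝ)) := by field_simp
            _ ≤ (K:ℝ) * h k0 := by
                exact mul_le_mul_of_nonneg_left hk0 (le_of_lt hKpos)
  exact le_csSup hbdd hin

end
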